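/- Let σ be a permutation of {1,…,n} with σ(C) = C for a binary linear code C, and define the unitary V on (ℂ²)^⊗n as the product of CZ gates applied between qubits i and σ(i) for all i with σ(i) ≠ i. Then for every S with x-string in C, V (X_S) V† = ± X_S · Z_{σ(S)} Z_{σ⁻¹(S)}, where Z_{σ(S)} Z_{σ⁻¹(S)} is a product of Z operators on the symmetric-difference-with-multiplicity σ(S) Δ σ⁻¹(S). -/

import Mathlib

open Finset Matrix

noncomputable section

/-- The X-type Pauli operator `X_S = ∏_{i∈S} X_i` on n qubits, as a matrix
indexed by computational basis states `Fin n → ZMod 2`. -/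
def XS (n : ℕ) (S : Finset (Fin n)) :
    Matrix (Fin n → ZMod 2) (Fin n → ZMod 2) ℂ :=
  fun v w => if w = v + (fun i => if i ∈ S then 1 else 0) then 1 else 0

/-- The Z-type Pauli operator `Z_T = ∏_{i∈T} Z_i` (diagonal). -/
def ZT (n : ℕ) (T : Finset (Fin n)) :
    Matrix (Fin n → ZMod 2) (Fin n → ZMod 2) ℂ :=
  fun v w => if v = w then (-1 : ℂ) ^ (∑ i ∈ T, (v i).val) else 0

/-- The product of CZ gates applied between qubits `i` and `σ(i)`, for all `i`
with `σ(i) ≠ i` (the CZ gates are mutually commuting diagonal gates, so this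
diagonal matrix is their product in any order). -/
def Vgate (n : ℕ) (σ : Equiv.Perm (Fin n)) :
    Matrix (Fin n → ZMod 2) (Fin n → ZMod 2) ℂ :=
  fun v w => if v = w then
    (-1 : ℂ) ^ (∑ i ∈ Finset.univ.filter (fun i => σ i ≠ i), (v i).val * (v (σ i)).val)
  else 0

/-- If `σ` is a permutation with `σ(C) = C` for a binary linear code `C`, and
`V` is the product of CZ gates from `i` to `σ(i)`, then for every `S` whose
indicator vector lies in `C`, conjugating `X_S` by `V` gives
`± X_S · Z_{σ(S)} Z_{σ⁻¹(S)}`. -/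
private lemma zmod2_add_self (x : ZMod 2) : x + x = 0 := by revert x; decide

private lemma zmod2_val_cast (a : ZMod 2) : ((a.val : ℕ) : ZMod 2) = a := by revert a; decide

private lemma neg_one_pow_congr_zmod2 {a b : ℕ} (h : (a : ZMod 2) = (b : ZMod 2)) :
    ((-1 : ℂ)) ^ a = (-1) ^ b := by
  have h2 : a % 2 = b % 2 := (ZMod.natCast_eq_natCast_iff a b 2).mp h
  rw [neg_one_pow_eq_pow_mod_two, h2, ← neg_one_pow_eq_pow_mod_two]

private lemma key_parity {n : ℕ} (σ : Equiv.Perm (Fin n)) (S : Finset (Fin n))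
    (v e : Fin n → ZMod 2) (he : ∀ i, e i = if i ∈ S then 1 else 0) :
    (∑ i ∈ Finset.univ.filter (fun i => σ i ≠ i), v i * v (σ i)) +
      (∑ i ∈ Finset.univ.filter (fun i => σ i ≠ i), (v i + e i) * (v (σ i) + e (σ i)))
    = (∑ i ∈ Finset.univ.filter (fun i => σ i ≠ i), e i * e (σ i)) +
      ((∑ i ∈ S.image ⇑σ, (v i + e i)) + ∑ i ∈ S.image ⇑σ⁻¹, (v i + e i)) := by
  classical
  set F := Finset.univ.filter (fun i => σ i ≠ i) with hF
  set G := Finset.univ.filter (fun i => ¬ σ i ≠ i) with hG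
  have hSsum : ∀ f : Fin n → ZMod 2, ∑ i ∈ S, f i = ∑ i : Fin n, e i * f i := by
    intro f
    have h1 : ∀ i : Fin n, e i * f i = if i ∈ S then f i else 0 := by
      intro i; rw [he i]; split <;> simp
    rw [Finset.sum_congr rfl (fun i _ => h1 i), Finset.sum_ite_mem, Finset.univ_inter]
  have hsplit : ∀ f g : Fin n → ZMod 2,
      ∑ i : Fin n, f i * g (σ i) = (∑ i ∈ F, f i * g (σ i)) + ∑ i ∈ G, f i * g i := by
    intro f g
    rw [← Finset.sum_filter_add_sum_filter_not Finset.univ (fun i => σ i ≠ i)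
      (fun i => f i * g (σ i))]
    congr 1
    refine Finset.sum_congr rfl (fun i hi => ?_)
    have h2 : σ i = i := by simpa using (Finset.mem_filter.mp hi).2
    rw [h2]
  have hreindex : ∀ f g : Fin n → ZMod 2,
      ∑ i : Fin n, f i * g (σ i) = ∑ i : Fin n, f (σ⁻¹ i) * g i := by
    intro f g
    rw [← Equiv.sum_comp σ (fun j => f (σ⁻¹ j) * g j)]
    simp
  have him1 : ∑ i ∈ S.image ⇑σ, (v i + e i) = ∑ i ∈ S, (v (σ i) + e (σ i)) :=
    Finset.sum_image (fun x _ y _ h => σ.injective h)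
  have him2 : ∑ i ∈ S.image ⇑σ⁻¹, (v i + e i) = ∑ i ∈ S, (v (σ⁻¹ i) + e (σ⁻¹ i)) :=
    Finset.sum_image (fun x _ y _ h => (σ⁻¹ : Equiv.Perm (Fin n)).injective h)
  have hexp : (∑ i ∈ F, (v i + e i) * (v (σ i) + e (σ i)))
      = (∑ i ∈ F, v i * v (σ i)) + ((∑ i ∈ F, v i * e (σ i)) +
        ((∑ i ∈ F, e i * v (σ i)) + ∑ i ∈ F, e i * e (σ i))) := by
    rw [← Finset.sum_add_distrib, ← Finset.sum_add_distrib, ← Finset.sum_add_distrib]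
    exact Finset.sum_congr rfl (fun i _ => by ring)
  have hX : (∑ i ∈ F, v i * e (σ i)) = (∑ i : Fin n, v i * e (σ i)) + ∑ i ∈ G, v i * e i := by
    rw [hsplit v e, add_assoc, zmod2_add_self, add_zero]
  have hY : (∑ i ∈ F, e i * v (σ i)) = (∑ i : Fin n, e i * v (σ i)) + ∑ i ∈ G, e i * v i := by
    rw [hsplit e v, add_assoc, zmod2_add_self, add_zero]
  have hGcomm : (∑ i ∈ G, v i * e i) = ∑ i ∈ G, e i * v i :=
    Finset.sum_congr rfl (fun i _ => mul_comm _ _)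
  have hXY : (∑ i ∈ F, v i * e (σ i)) + (∑ i ∈ F, e i * v (σ i))
      = (∑ i ∈ S, v (σ i)) + ∑ i ∈ S, v (σ⁻¹ i) := by
    rw [hX, hY, hGcomm]
    have h1 : ∑ i ∈ S, v (σ i) = ∑ i : Fin n, e i * v (σ i) := hSsum (fun i => v (σ i))
    have h2 : ∑ i ∈ S, v (σ⁻¹ i) = ∑ i : Fin n, e i * v (σ⁻¹ i) := hSsum (fun i => v (σ⁻¹ i))
    have h3 : ∑ i : Fin n, v i * e (σ i) = ∑ i : Fin n, e i * v (σ⁻¹ i) := by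
      rw [hreindex v e]
      exact Finset.sum_congr rfl (fun i _ => mul_comm _ _)
    rw [h1, h2, h3]
    linear_combination zmod2_add_self (∑ i ∈ G, e i * v i)
  have hee : (∑ i ∈ S, e (σ i)) + (∑ i ∈ S, e (σ⁻¹ i)) = 0 := by
    have h1 : ∑ i ∈ S, e (σ i) = ∑ i : Fin n, e i * e (σ i) := hSsum (fun i => e (σ i))
    have h2 : ∑ i ∈ S, e (σ⁻¹ i) = ∑ i : Fin n, e i * e (σ⁻¹ i) := hSsum (fun i => e (σ⁻¹ i))
    have h3 : ∑ i : Fin n, e i * e (σ⁻¹ i) = ∑ i : Fin n, e i * e (σ i) := by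
      rw [hreindex e e]
      exact Finset.sum_congr rfl (fun i _ => mul_comm _ _)
    rw [h1, h2, h3]
    exact zmod2_add_self _
  rw [hexp, him1, him2, Finset.sum_add_distrib, Finset.sum_add_distrib]
  linear_combination hXY - hee + zmod2_add_self (∑ i ∈ F, v i * v (σ i))

theorem stmt_8 (n : ℕ) (C : Submodule (ZMod 2) (Fin n → ZMod 2)) (σ : Equiv.Perm (Fin n))
    (hσ : ∀ x, x ∈ C ↔ (x ∘ ⇑σ⁻¹) ∈ C)
    (S : Finset (Fin n)) (hS : (fun i => if i ∈ S then (1 : ZMod 2) else 0) ∈ C) :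
    ∃ ε : ℂ, (ε = 1 ∨ ε = -1) ∧
      Vgate n σ * XS n S * (Vgate n σ)ᴴ
        = ε • (XS n S * ZT n (S.image ⇑σ) * ZT n (S.image ⇑σ⁻¹)) := by
  classical
  refine ⟨(-1) ^ (∑ i ∈ Finset.univ.filter (fun i => σ i ≠ i),
      ((if i ∈ S then (1 : ZMod 2) else 0).val * (if σ i ∈ S then (1 : ZMod 2) else 0).val)),
    neg_one_pow_eq_or ℂ _, ?_⟩
  have hV : Vgate n σ = Matrix.diagonal (fun v : Fin n → ZMod 2 =>
      (-1 : ℂ) ^ (∑ i ∈ Finset.univ.filter (fun i => σ i ≠ i), (v i).val * (v (σ i)).val)) := rfl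
  have hZ : ∀ T : Finset (Fin n), ZT n T = Matrix.diagonal (fun v : Fin n → ZMod 2 =>
      (-1 : ℂ) ^ (∑ i ∈ T, (v i).val)) := fun T => rfl
  rw [hV, hZ, hZ, Matrix.diagonal_conjTranspose]
  ext v w
  simp only [Matrix.smul_apply, Matrix.mul_diagonal, Matrix.diagonal_mul, Pi.star_apply,
    smul_eq_mul, XS]
  by_cases h : w = v + fun i => if i ∈ S then (1 : ZMod 2) else 0
  · subst h
    simp only [if_pos rfl, if_true, mul_one, one_mul, star_pow, star_neg, star_one]
    rw [← pow_add, ← pow_add, ← pow_add]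
    apply neg_one_pow_congr_zmod2
    push_cast [zmod2_val_cast]
    simp only [Pi.add_apply]
    exact key_parity σ S v (fun i => if i ∈ S then 1 else 0) (fun _ => rfl)
  · simp [if_neg h]
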